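/- Let A, B, C, D be positive real numbers and define f : ℝ⁵ → ℝ by f(x₁,x₂,x₃,x₄,z) = (Ax₁+B)^{−1/2}·(Cz+D)^{−1} on the open set {(x₁,x₂,x₃,x₄,z) : Ax₁+B > 0 and Cz+D > 0}. Then f satisfies equation (★) at every point of this set, and ∂f/∂z is nowhere zero on this set. -/

import Mathlib

/-- The partial derivative of `f : ℝ⁵ → ℝ` in the `i`-th coordinate direction
(coordinates are `x₁, x₂, x₃, x₄` for indices `0,1,2,3` and `z` for index `4`). -/
noncomputable def pd (i : Fin 5) (f : (Fin 5 → ℝ) → ℝ) : (Fin 5 → ℝ) → ℝ :=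
  fun x => fderiv ℝ f x (Pi.single i 1)

/-- The left-hand side of equation (★):
`∑_{i=1}^{4} ( f² f_{iiz} − 2 f fᵢ f_{iz} + f f_z f_{ii} − 4 f_z fᵢ² )
  + 4 f_z ( f f_{zz} − 2 f_z² )`. -/
noncomputable def starLHS (f : (Fin 5 → ℝ) → ℝ) (x : Fin 5 → ℝ) : ℝ :=
  (∑ i : Fin 4,
      ((f x) ^ 2 * pd 4 (pd i.castSucc (pd i.castSucc f)) x
        - 2 * f x * pd i.castSucc f x * pd 4 (pd i.castSucc f) x
        + f x * pd 4 f x * pd i.castSucc (pd i.castSucc f) x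
        - 4 * pd 4 f x * (pd i.castSucc f x) ^ 2))
    + 4 * pd 4 f x * (f x * pd 4 (pd 4 f) x - 2 * (pd 4 f x) ^ 2)

/-- Auxiliary family of functions `c * (A x₀ + B)^r * (C x₄ + D)^s`. -/
noncomputable def QQ (A B C D c r s : ℝ) : (Fin 5 → ℝ) → ℝ :=
  fun x => c * ((A * x 0 + B) ^ r * (C * x 4 + D) ^ s)

lemma pdQ (A B C D c r s : ℝ) (i : Fin 5) (x : Fin 5 → ℝ)
    (hp : 0 < A * x 0 + B) (hq : 0 < C * x 4 + D) :
    pd i (QQ A B C D c r s) x =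
      if i = 0 then QQ A B C D (c * r * A) (r - 1) s x
      else if i = 4 then QQ A B C D (c * s * C) r (s - 1) x else 0 := by
  have h0 : HasFDerivAt (fun y : Fin 5 → ℝ => A * y 0 + B)
      (A • ContinuousLinearMap.proj (R := ℝ) (φ := fun _ : Fin 5 => ℝ) 0) x :=
    (((ContinuousLinearMap.proj (R := ℝ) (φ := fun _ : Fin 5 => ℝ) 0).hasFDerivAt).const_mul A).add_const B
  have h4 : HasFDerivAt (fun y : Fin 5 → ℝ => C * y 4 + D)
      (C • ContinuousLinearMap.proj (R := ℝ) (φ := fun _ : Fin 5 => ℝ) 4) x :=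
    (((ContinuousLinearMap.proj (R := ℝ) (φ := fun _ : Fin 5 => ℝ) 4).hasFDerivAt).const_mul C).add_const D
  have hu := h0.rpow_const (p := r) (Or.inl hp.ne')
  have hv := h4.rpow_const (p := s) (Or.inl hq.ne')
  have hm := (hu.mul hv).const_mul c
  have key : pd i (QQ A B C D c r s) x =
      (c • ((A * x 0 + B) ^ r • ((s * (C * x 4 + D) ^ (s - 1)) •
          (C • ContinuousLinearMap.proj (R := ℝ) (φ := fun _ : Fin 5 => ℝ) 4))
        + (C * x 4 + D) ^ s • ((r * (A * x 0 + B) ^ (r - 1)) •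
          (A • ContinuousLinearMap.proj (R := ℝ) (φ := fun _ : Fin 5 => ℝ) 0)))) (Pi.single i 1) := by
    unfold pd QQ
    exact congrArg (· (Pi.single i 1)) hm.fderiv
  rw [key]
  fin_cases i <;> simp [QQ, Pi.single_apply] <;> ring

lemma pdQ0 (A B C D c r s : ℝ) (x : Fin 5 → ℝ)
    (hp : 0 < A * x 0 + B) (hq : 0 < C * x 4 + D) :
    pd 0 (QQ A B C D c r s) x = QQ A B C D (c * r * A) (r - 1) s x := by
  rw [pdQ A B C D c r s 0 x hp hq]; simp

lemma pdQ4 (A B C D c r s : ℝ) (x : Fin 5 → ℝ)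
    (hp : 0 < A * x 0 + B) (hq : 0 < C * x 4 + D) :
    pd 4 (QQ A B C D c r s) x = QQ A B C D (c * s * C) r (s - 1) x := by
  rw [pdQ A B C D c r s 4 x hp hq, if_neg (by decide), if_pos rfl]

lemma pdQj (A B C D c r s : ℝ) (j : Fin 5) (hj0 : j ≠ 0) (hj4 : j ≠ 4) (x : Fin 5 → ℝ)
    (hp : 0 < A * x 0 + B) (hq : 0 < C * x 4 + D) :
    pd j (QQ A B C D c r s) x = 0 := by
  rw [pdQ A B C D c r s j x hp hq, if_neg hj0, if_neg hj4]

lemma pd_congr (i : Fin 5) {g h : (Fin 5 → ℝ) → ℝ} {U : Set (Fin 5 → ℝ)}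
    (hU : IsOpen U) (hgh : Set.EqOn g h U) {x : Fin 5 → ℝ} (hx : x ∈ U) :
    pd i g x = pd i h x := by
  unfold pd
  rw [Filter.EventuallyEq.fderiv_eq (hgh.eventuallyEq_of_mem (hU.mem_nhds hx))]

lemma pd_zero (i : Fin 5) (x : Fin 5 → ℝ) : pd i (fun _ => (0:ℝ)) x = 0 := by
  unfold pd
  rw [fderiv_fun_const]
  simp

/-- for positive `A, B, C, D`, the function
`f(x₁,…,x₄,z) = (Ax₁+B)^{−1/2}·(Cz+D)^{−1}` satisfies equation (★) at every point
of `{Ax₁+B > 0 and Cz+D > 0}`, and `∂f/∂z` is nowhere zero on this set. -/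
theorem stmt_9 (A B C D : ℝ) (hA : 0 < A) (hB : 0 < B) (hC : 0 < C) (hD : 0 < D)
    (f : (Fin 5 → ℝ) → ℝ)
    (hf : ∀ x, f x = (A * x 0 + B) ^ (-(1 / 2 : ℝ)) * (C * x 4 + D)⁻¹) :
    ∀ x : Fin 5 → ℝ, 0 < A * x 0 + B → 0 < C * x 4 + D →
      starLHS f x = 0 ∧ pd 4 f x ≠ 0 := by
  intro x hpx hqx
  set U : Set (Fin 5 → ℝ) := {y | 0 < A * y 0 + B ∧ 0 < C * y 4 + D} with hUdef
  have hU : IsOpen U := by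
    apply IsOpen.inter
    · exact isOpen_lt continuous_const ((continuous_const.mul (continuous_apply 0)).add continuous_const)
    · exact isOpen_lt continuous_const ((continuous_const.mul (continuous_apply 4)).add continuous_const)
  have hxU : x ∈ U := ⟨hpx, hqx⟩
  have hfQ : Set.EqOn f (QQ A B C D 1 (-(1/2)) (-1)) U := by
    intro y hy
    rw [hf, QQ, one_mul, Real.rpow_neg hy.2.le, Real.rpow_one]
  -- first derivatives
  have e0 : Set.EqOn (pd 0 f) (QQ A B C D (1 * -(1/2) * A) (-(1/2) - 1) (-1)) U :=
    fun y hy => (pd_congr 0 hU hfQ hy).trans (pdQ0 A B C D 1 (-(1/2)) (-1) y hy.1 hy.2)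
  have e4 : Set.EqOn (pd 4 f) (QQ A B C D (1 * -1 * C) (-(1/2)) (-1 - 1)) U :=
    fun y hy => (pd_congr 4 hU hfQ hy).trans (pdQ4 A B C D 1 (-(1/2)) (-1) y hy.1 hy.2)
  -- second derivatives
  have e00 : Set.EqOn (pd 0 (pd 0 f))
      (QQ A B C D (1 * -(1/2) * A * (-(1/2) - 1) * A) (-(1/2) - 1 - 1) (-1)) U :=
    fun y hy => (pd_congr 0 hU e0 hy).trans
      (pdQ0 A B C D (1 * -(1/2) * A) (-(1/2) - 1) (-1) y hy.1 hy.2)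
  have e40 : pd 4 (pd 0 f) x = QQ A B C D (1 * -(1/2) * A * -1 * C) (-(1/2) - 1) (-1 - 1) x :=
    (pd_congr 4 hU e0 hxU).trans (pdQ4 A B C D (1 * -(1/2) * A) (-(1/2) - 1) (-1) x hpx hqx)
  have e44 : pd 4 (pd 4 f) x = QQ A B C D (1 * -1 * C * (-1 - 1) * C) (-(1/2)) (-1 - 1 - 1) x :=
    (pd_congr 4 hU e4 hxU).trans (pdQ4 A B C D (1 * -1 * C) (-(1/2)) (-1 - 1) x hpx hqx)
  -- third derivative
  have e400 : pd 4 (pd 0 (pd 0 f)) x =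
      QQ A B C D (1 * -(1/2) * A * (-(1/2) - 1) * A * -1 * C) (-(1/2) - 1 - 1) (-1 - 1) x :=
    (pd_congr 4 hU e00 hxU).trans
      (pdQ4 A B C D (1 * -(1/2) * A * (-(1/2) - 1) * A) (-(1/2) - 1 - 1) (-1) x hpx hqx)
  -- side directions j = 1, 2, 3
  have hside : ∀ j : Fin 5, j ≠ 0 → j ≠ 4 →
      pd j f x = 0 ∧ pd j (pd j f) x = 0 ∧ pd 4 (pd j f) x = 0 ∧
        pd 4 (pd j (pd j f)) x = 0 := by
    intro j hj0 hj4
    have ej : Set.EqOn (pd j f) (fun _ => (0:ℝ)) U :=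
      fun y hy => (pd_congr j hU hfQ hy).trans (pdQj A B C D 1 (-(1/2)) (-1) j hj0 hj4 y hy.1 hy.2)
    have ejj : Set.EqOn (pd j (pd j f)) (fun _ => (0:ℝ)) U :=
      fun y hy => (pd_congr j hU ej hy).trans (pd_zero j y)
    exact ⟨ej hxU, ejj hxU,
      (pd_congr 4 hU ej hxU).trans (pd_zero 4 x),
      (pd_congr 4 hU ejj hxU).trans (pd_zero 4 x)⟩
  obtain ⟨s1a, s1b, s1c, s1d⟩ := hside 1 (by decide) (by decide)
  obtain ⟨s2a, s2b, s2c, s2d⟩ := hside 2 (by decide) (by decide)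
  obtain ⟨s3a, s3b, s3c, s3d⟩ := hside 3 (by decide) (by decide)
  -- castSucc values
  have hc0 : ((0 : Fin 4).castSucc : Fin 5) = 0 := rfl
  have hc1 : ((1 : Fin 4).castSucc : Fin 5) = 1 := rfl
  have hc2 : ((2 : Fin 4).castSucc : Fin 5) = 2 := rfl
  have hc3 : ((3 : Fin 4).castSucc : Fin 5) = 3 := rfl
  -- power rewrites
  set p : ℝ := A * x 0 + B with hp
  set q : ℝ := C * x 4 + D with hq
  have h3 : p ^ (-(1/2:ℝ) - 1) = (p ^ (-(1/2:ℝ))) ^ (3:ℕ) := by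
    rw [← Real.rpow_natCast (p ^ (-(1/2:ℝ))) 3, ← Real.rpow_mul hpx.le]
    norm_num
  have h5 : p ^ (-(1/2:ℝ) - 1 - 1) = (p ^ (-(1/2:ℝ))) ^ (5:ℕ) := by
    rw [← Real.rpow_natCast (p ^ (-(1/2:ℝ))) 5, ← Real.rpow_mul hpx.le]
    norm_num
  have k1 : q ^ (-1:ℝ) = (q⁻¹) ^ (1:ℕ) := by
    rw [Real.rpow_neg hqx.le, Real.rpow_one, pow_one]
  have k2 : q ^ (-1 - 1:ℝ) = (q⁻¹) ^ (2:ℕ) := by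
    rw [show (-1 - 1:ℝ) = -((2:ℕ):ℝ) by norm_num, Real.rpow_neg hqx.le,
      Real.rpow_natCast, inv_pow]
  have k3 : q ^ (-1 - 1 - 1:ℝ) = (q⁻¹) ^ (3:ℕ) := by
    rw [show (-1 - 1 - 1:ℝ) = -((3:ℕ):ℝ) by norm_num, Real.rpow_neg hqx.le,
      Real.rpow_natCast, inv_pow]
  have ha : 0 < p ^ (-(1/2:ℝ)) := Real.rpow_pos_of_pos hpx _
  have hb : 0 < q⁻¹ := inv_pos.mpr hqx
  constructor
  · rw [starLHS, Fin.sum_univ_four, hc0, hc1, hc2, hc3, hf x,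
      e0 hxU, e4 hxU, e00 hxU, e40, e44, e400, s1a, s1b, s1c, s1d,
      s2a, s2b, s2c, s2d, s3a, s3b, s3c, s3d]
    simp only [QQ, ← hp, ← hq, h3, h5, k1, k2, k3]
    ring
  · rw [e4 hxU]
    simp only [QQ, ← hp, ← hq, k2]
    have : 0 < C * (p ^ (-(1/2:ℝ)) * (q⁻¹)^(2:ℕ)) := by positivity
    intro hcon
    rw [show (1 * -1 * C : ℝ) = -C by ring, neg_mul] at hcon
    exact (neg_ne_zero.mpr this.ne').elim (by linarith [hcon])
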